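/- Let L ∈ F⟨X⟩^{d×d} be a full linear matrix that is stably associated to a nonconstant polynomial f ∈ F⟨X⟩ (for instance, obtained from f by Higman linearization). Then there exist a unit U' ∈ F⟨X⟩^{d×d}, an invertible scalar matrix S' ∈ F^{d×d} and an integer r' with 0 ≤ r' < d such that S'·L·U' = L' ⊕ I_{r'}, where L' ∈ F⟨X⟩^{(d−r')×(d−r')} is a full left monic linear matrix; moreover, if L is not left monic then r' > 0. -/

import Mathlib

open Matrix BigOperators

/-- The degree of an element of the free algebra: the maximal length of a word
with nonzero coefficient. -/
noncomputable def ncDeg {F : Type*} [Field F] {σ : Type*} (f : FreeAlgebra F σ) : ℕ :=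
  (((FreeAlgebra.equivMonoidAlgebraFreeMonoid (R := F) (X := σ)) f).coeff.support.sup fun w => FreeMonoid.length w)

/-- A noncommutative polynomial is irreducible if it has degree ≥ 1 and admits no
factorization into two factors of degree ≥ 1. -/
def NCIrred {F : Type*} [Field F] {σ : Type*} (f : FreeAlgebra F σ) : Prop :=
  1 ≤ ncDeg f ∧ ¬ ∃ g h : FreeAlgebra F σ, f = g * h ∧ 1 ≤ ncDeg g ∧ 1 ≤ ncDeg h

/-- The linear matrix `A0 + ∑ i, A i • x i` with scalar coefficient matrices. -/
noncomputable def linMatrix {F : Type*} [Field F] {σ α β : Type*} [Fintype σ]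
    (A0 : Matrix α β F) (A : σ → Matrix α β F) : Matrix α β (FreeAlgebra F σ) :=
  Matrix.of fun j k =>
    algebraMap F (FreeAlgebra F σ) (A0 j k) + ∑ i, A i j k • FreeAlgebra.ι F i

/-- A matrix over the free algebra is a linear matrix if each entry is an affine
linear form. -/
def IsLinearMat {F : Type*} [Field F] {σ α β : Type*} [Fintype σ]
    (M : Matrix α β (FreeAlgebra F σ)) : Prop :=
  ∃ (A0 : Matrix α β F) (A : σ → Matrix α β F), M = linMatrix A0 A

/-- A square matrix is full if it cannot be written as a product through a smaller
dimension. -/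
def IsFullMat {R : Type*} [Semiring R] {α : Type*} [Fintype α]
    (M : Matrix α α R) : Prop :=
  ¬ ∃ (e : ℕ) (_ : e < Fintype.card α)
      (M₁ : Matrix α (Fin e) R) (M₂ : Matrix (Fin e) α R), M = M₁ * M₂

/-- A full non-unit square matrix is an atom if it cannot be written as a product of
two full non-units. -/
def IsMatAtom {R : Type*} [Semiring R] {α : Type*} [Fintype α] [DecidableEq α]
    (M : Matrix α α R) : Prop :=
  IsFullMat M ∧ ¬ IsUnit M ∧
    ∀ A B : Matrix α α R, M = A * B →
      ¬ (IsFullMat A ∧ ¬ IsUnit A ∧ IsFullMat B ∧ ¬ IsUnit B)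

/-- The coefficient family `A` is right monic: `[A_1 A_2 ⋯ ]` has full row rank. -/
def RightMonicCoeffs {F : Type*} [Field F] {σ α : Type*} [Fintype σ] [Fintype α]
    (A : σ → Matrix α α F) : Prop :=
  (Matrix.of fun (j : α) (p : σ × α) => A p.1 j p.2).rank = Fintype.card α

/-- The coefficient family `A` is left monic: the stacked matrix has full column rank. -/
def LeftMonicCoeffs {F : Type*} [Field F] {σ α : Type*} [Fintype σ] [Fintype α]
    (A : σ → Matrix α α F) : Prop :=
  (Matrix.of fun (p : σ × α) (k : α) => A p.1 p.2 k).rank = Fintype.card α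

/-- A right monic linear matrix. -/
def IsRightMonicLinear {F : Type*} [Field F] {σ α : Type*} [Fintype σ] [Fintype α]
    (M : Matrix α α (FreeAlgebra F σ)) : Prop :=
  ∃ (A0 : Matrix α α F) (A : σ → Matrix α α F), M = linMatrix A0 A ∧ RightMonicCoeffs A

/-- A left monic linear matrix. -/
def IsLeftMonicLinear {F : Type*} [Field F] {σ α : Type*} [Fintype σ] [Fintype α]
    (M : Matrix α α (FreeAlgebra F σ)) : Prop :=
  ∃ (A0 : Matrix α α F) (A : σ → Matrix α α F), M = linMatrix A0 A ∧ LeftMonicCoeffs A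

/-- `M ⊕ I_k` : block diagonal with blocks `M` and the `k × k` identity. -/
def oplusId {R : Type*} [Semiring R] {d : ℕ} (M : Matrix (Fin d) (Fin d) R) (k : ℕ) :
    Matrix (Fin (d + k)) (Fin (d + k)) R :=
  Matrix.reindex finSumFinEquiv finSumFinEquiv (Matrix.fromBlocks M 0 0 1)

/-- A polynomial viewed as a `1 × 1` matrix. -/
def toMat1 {R : Type*} (f : R) : Matrix (Fin 1) (Fin 1) R := Matrix.of fun _ _ => f

/-- Block lower triangular matrix `[[A, 0], [D, B]]`. -/
def lowerBlocks {R : Type*} [Semiring R] {r s : ℕ}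
    (A : Matrix (Fin r) (Fin r) R) (D : Matrix (Fin s) (Fin r) R)
    (B : Matrix (Fin s) (Fin s) R) : Matrix (Fin (r + s)) (Fin (r + s)) R :=
  Matrix.reindex finSumFinEquiv finSumFinEquiv (Matrix.fromBlocks A 0 D B)

/-- `A` and `B` are stable associates: `A ⊕ I_t = P (B ⊕ I_t') Q` for units `P, Q`. -/
def StableAssoc {R : Type*} [Semiring R] {d d' : ℕ}
    (A : Matrix (Fin d) (Fin d) R) (B : Matrix (Fin d') (Fin d') R) : Prop :=
  ∃ (t t' : ℕ), 0 < t ∧ 0 < t' ∧ ∃ (h : d' + t' = d + t),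
    ∃ P Q : Matrix (Fin (d + t)) (Fin (d + t)) R, IsUnit P ∧ IsUnit Q ∧
      oplusId A t = P * Matrix.reindex (finCongr h) (finCongr h) (oplusId B t') * Q

/-- The dilated linear matrix `A0 ⊗ I_ℓ + ∑ i, A i ⊗ (Y i + M i)` in the matrix
variables `y_{i,j,k}`. -/
noncomputable def dilate {F : Type*} [Field F] {n d : ℕ}
    (A0 : Matrix (Fin d) (Fin d) F) (A : Fin n → Matrix (Fin d) (Fin d) F) (ℓ : ℕ)
    (M : Fin n → Matrix (Fin ℓ) (Fin ℓ) F) :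
    Matrix (Fin d × Fin ℓ) (Fin d × Fin ℓ) (FreeAlgebra F (Fin n × Fin ℓ × Fin ℓ)) :=
  Matrix.of fun p q =>
    algebraMap F (FreeAlgebra F (Fin n × Fin ℓ × Fin ℓ))
      (A0 p.1 q.1 * (if p.2 = q.2 then 1 else 0) + ∑ i, A i p.1 q.1 * M i p.2 q.2) +
      ∑ i : Fin n, A i p.1 q.1 • FreeAlgebra.ι F (i, p.2, q.2)

/-- The diagonal block of `M` corresponding to the fiber `b ⁻¹ {i}`, reindexed by `Fin`. -/
noncomputable def diagBlock {R : Type*} {d r : ℕ} (M : Matrix (Fin d) (Fin d) R)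
    (b : Fin d → Fin r) (i : Fin r) :
    Matrix (Fin (Fintype.card {j : Fin d // b j = i}))
      (Fin (Fintype.card {j : Fin d // b j = i})) R :=
  Matrix.of fun x y =>
    M ((Fintype.equivFin {j : Fin d // b j = i}).symm x : {j : Fin d // b j = i})
      ((Fintype.equivFin {j : Fin d // b j = i}).symm y : {j : Fin d // b j = i})

theorem not_isUnit_of_ncDeg {F : Type*} [Field F] {σ : Type*} {f : FreeAlgebra F σ}
    (hdeg : 1 ≤ ncDeg f) : ¬ IsUnit f := by
  rintro ⟨u, rfl⟩
  classical
  set Φ := FreeAlgebra.equivMonoidAlgebraFreeMonoid (R := F) (X := σ) with hΦdef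
  set F1 := Φ ↑u with hF1
  set G1 := Φ ↑u⁻¹ with hG1
  have hΦ : F1 * G1 = 1 := by rw [hF1, hG1, ← _root_.map_mul, u.mul_inv, _root_.map_one]
  have hdeg' : 1 ≤ F1.coeff.support.sup (fun w => FreeMonoid.length w) := hdeg
  have hne : F1.coeff.support.Nonempty := by
    rcases Finset.eq_empty_or_nonempty F1.coeff.support with h | h
    · exfalso; rw [h] at hdeg'; simp at hdeg'
    · exact h
  have hG1ne : G1 ≠ 0 := by
    intro h; rw [h, mul_zero] at hΦ; exact one_ne_zero hΦ.symm
  have hgne : G1.coeff.support.Nonempty := Finsupp.support_nonempty_iff.mpr (by simpa using hG1ne)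
  obtain ⟨w, hw, hwlen⟩ := Finset.exists_mem_eq_sup F1.coeff.support hne (fun w => FreeMonoid.length w)
  obtain ⟨v, hv, hvlen⟩ := Finset.exists_mem_eq_sup G1.coeff.support hgne (fun w => FreeMonoid.length w)
  have hcoeff : (F1 * G1).coeff (w * v) = F1.coeff w * G1.coeff v := by
    rw [MonoidAlgebra.coeff_mul]
    simp only [Finsupp.sum]
    rw [Finset.sum_eq_single w]
    · rw [Finset.sum_eq_single v]
      · simp
      · intro b hb hbv
        rw [if_neg]
        intro hcon
        exact hbv (mul_left_cancel hcon)
      · intro h; exact absurd hv h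
    · intro a ha haw
      rw [Finset.sum_eq_zero]
      intro b hb
      rw [if_neg]
      intro hcon
      have hlen : FreeMonoid.length a + FreeMonoid.length b
          = FreeMonoid.length w + FreeMonoid.length v := by
        rw [← FreeMonoid.length_mul, ← FreeMonoid.length_mul, hcon]
      have h1 : FreeMonoid.length a ≤ FreeMonoid.length w := by
        exact (Finset.le_sup (f := fun w => FreeMonoid.length w) ha).trans hwlen.le
      have h2 : FreeMonoid.length b ≤ FreeMonoid.length v := by
        exact (Finset.le_sup (f := fun w => FreeMonoid.length w) hb).trans hvlen.le
      have : FreeMonoid.length a = FreeMonoid.length w := by omega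
      have := List.append_inj (congrArg FreeMonoid.toList hcon) this
      exact haw (FreeMonoid.toList.injective this.1)
    · intro h; exact absurd hw h
  have hone : (1 : MonoidAlgebra F (FreeMonoid σ)).coeff (w * v) = 0 := by
    rw [MonoidAlgebra.one_def, MonoidAlgebra.coeff_single, Finsupp.single_apply, if_neg]
    intro hcon
    have : FreeMonoid.length w + FreeMonoid.length v = 0 := by
      rw [← FreeMonoid.length_mul, ← hcon]; rfl
    have hw1 : FreeMonoid.length w = 0 := by omega
    rw [FreeMonoid.length_eq_zero] at hw1
    rw [hwlen, hw1] at hdeg'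
    have h0 : FreeMonoid.length (1 : FreeMonoid σ) = 0 := FreeMonoid.length_eq_zero.mpr rfl
    omega
  rw [hΦ, hone] at hcoeff
  exact mul_ne_zero (Finsupp.mem_support_iff.mp hw) (Finsupp.mem_support_iff.mp hv) hcoeff.symm

section MatHelpers
variable {R : Type*} [Semiring R]

lemma isUnit_fromBlocks_iff {e r : ℕ} (B : Matrix (Fin e) (Fin e) R) :
    IsUnit (Matrix.fromBlocks B 0 0 (1 : Matrix (Fin r) (Fin r) R)) ↔ IsUnit B := by
  constructor
  · intro h
    obtain ⟨V, h1, h2⟩ := isUnit_iff_exists.mp h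
    rw [← Matrix.fromBlocks_toBlocks V, Matrix.fromBlocks_multiply,
      ← Matrix.fromBlocks_one, Matrix.fromBlocks_inj] at h1 h2
    simp only [Matrix.zero_mul, Matrix.mul_zero, add_zero, zero_add, Matrix.one_mul,
      Matrix.mul_one] at h1 h2
    exact isUnit_iff_exists.mpr ⟨_, h1.1, h2.1⟩
  · intro h
    obtain ⟨V, h1, h2⟩ := isUnit_iff_exists.mp h
    refine isUnit_iff_exists.mpr ⟨Matrix.fromBlocks V 0 0 1, ?_, ?_⟩
    · rw [Matrix.fromBlocks_multiply]
      simp [h1, ← Matrix.fromBlocks_one]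
    · rw [Matrix.fromBlocks_multiply]
      simp [h2, ← Matrix.fromBlocks_one]

lemma isUnit_submatrix_equiv {α β : Type*} [Fintype α] [Fintype β] [DecidableEq α] [DecidableEq β]
    {M : Matrix α α R} (eqv : β ≃ α) :
    IsUnit (M.submatrix ⇑eqv ⇑eqv) ↔ IsUnit M := by
  have heq : M.submatrix ⇑eqv ⇑eqv = Matrix.reindexAlgEquiv ℕ R eqv.symm M := by
    simp [Matrix.reindexAlgEquiv_apply, Matrix.reindex_apply]
  rw [heq]
  constructor
  · intro h
    have := h.map (Matrix.reindexAlgEquiv ℕ R eqv.symm).symm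
    simpa using this
  · intro h
    exact h.map (Matrix.reindexAlgEquiv ℕ R eqv.symm)

end MatHelpers

lemma finSumFinEquiv_symm_eq {e r : ℕ} (x : Fin (e + r)) :
    finSumFinEquiv.symm x = if h : (x : ℕ) < e then Sum.inl ⟨x, h⟩
      else Sum.inr ⟨(x : ℕ) - e, by omega⟩ := by
  rw [Equiv.symm_apply_eq]
  split_ifs with h
  · rw [finSumFinEquiv_apply_left]
    exact Fin.ext rfl
  · rw [finSumFinEquiv_apply_right]
    exact Fin.ext (by simp; omega)

def opd {R : Type*} [Semiring R] {e r d : ℕ} (heq : e + r = d) (B : Matrix (Fin e) (Fin e) R) :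
    Matrix (Fin d) (Fin d) R :=
  (Matrix.fromBlocks B 0 0 (1 : Matrix (Fin r) (Fin r) R)).submatrix
    ⇑((finCongr heq.symm).trans finSumFinEquiv.symm) ⇑((finCongr heq.symm).trans finSumFinEquiv.symm)

section OpdLemmas
variable {R : Type*} [Semiring R] {e r d : ℕ} (heq : e + r = d)

lemma opd_eq (B : Matrix (Fin e) (Fin e) R) :
    opd heq B = Matrix.reindex (finCongr heq) (finCongr heq) (oplusId B r) := by
  simp only [opd, oplusId, Matrix.reindex_apply, Matrix.submatrix_submatrix]
  rfl

lemma opd_mul (X Y : Matrix (Fin e) (Fin e) R) :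
    opd heq X * opd heq Y = opd heq (X * Y) := by
  unfold opd
  rw [Matrix.submatrix_mul_equiv, Matrix.fromBlocks_multiply]
  simp

lemma opd_isUnit_iff (B : Matrix (Fin e) (Fin e) R) :
    IsUnit (opd heq B) ↔ IsUnit B := by
  unfold opd
  rw [_root_.isUnit_submatrix_equiv, isUnit_fromBlocks_iff]

lemma opd_map {S : Type*} [Semiring S] (f : R →+* S) (B : Matrix (Fin e) (Fin e) R) :
    (opd heq B).map f = opd heq (B.map f) := by
  unfold opd
  ext i j
  simp only [Matrix.map_apply, Matrix.submatrix_apply]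
  set x := ((finCongr heq.symm).trans finSumFinEquiv.symm) i
  set y := ((finCongr heq.symm).trans finSumFinEquiv.symm) j
  cases x <;> cases y <;>
    simp [Matrix.one_apply, apply_ite ⇑f, _root_.map_one, _root_.map_zero]

lemma opd_entry (B : Matrix (Fin e) (Fin e) R) (i j : Fin d) :
    opd heq B i j = if hi : (i : ℕ) < e then
        (if hj : (j : ℕ) < e then B ⟨i, hi⟩ ⟨j, hj⟩ else 0)
      else (if (j : ℕ) < e then 0 else if (i : ℕ) = (j : ℕ) then (1 : R) else 0) := by
  have hd : d = e + r := heq.symm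
  have hi' := i.isLt
  have hj' := j.isLt
  simp only [opd, Matrix.submatrix_apply, Equiv.trans_apply, finCongr_apply]
  rw [finSumFinEquiv_symm_eq, finSumFinEquiv_symm_eq]
  simp only [Fin.coe_cast]
  split_ifs with h1 h2 h3 h4
  · rfl
  · rfl
  · rfl
  · rw [Matrix.fromBlocks_apply₂₂, Matrix.one_apply, if_pos (Fin.ext (by simp; omega))]
  · rw [Matrix.fromBlocks_apply₂₂, Matrix.one_apply, if_neg (by simp [Fin.ext_iff]; omega)]

end OpdLemmas

section FullLemmas
variable {R : Type*} [Semiring R]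

lemma isFullMat_mul_unit {d : ℕ} {P M Q : Matrix (Fin d) (Fin d) R}
    (hP : IsUnit P) (hQ : IsUnit Q) (hM : IsFullMat M) : IsFullMat (P * M * Q) := by
  rintro ⟨e, he, M₁, M₂, hMM⟩
  obtain ⟨P', hP1, hP2⟩ := isUnit_iff_exists.mp hP
  obtain ⟨Q', hQ1, hQ2⟩ := isUnit_iff_exists.mp hQ
  have key : M = P' * (P * M * Q) * Q' := by
    rw [Matrix.mul_assoc P M Q, ← Matrix.mul_assoc P' P (M * Q), hP2, Matrix.one_mul,
      Matrix.mul_assoc M Q Q', hQ1, Matrix.mul_one]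
  exact hM ⟨e, he, P' * M₁, M₂ * Q', by rw [key, hMM]; simp only [Matrix.mul_assoc]⟩

lemma isFullMat_of_opd {e r d : ℕ} (heq : e + r = d) {B : Matrix (Fin e) (Fin e) R}
    (h : IsFullMat (opd heq B)) : IsFullMat B := by
  rintro ⟨e', he', B₁, B₂, hB⟩
  have hcard : e' < e := by simpa using he'
  have hlt : e' + r < Fintype.card (Fin d) := by simp; omega
  refine h ⟨e' + r, hlt,
    (Matrix.fromBlocks B₁ 0 0 (1 : Matrix (Fin r) (Fin r) R)).submatrix
      ⇑((finCongr heq.symm).trans finSumFinEquiv.symm) ⇑(finSumFinEquiv.symm : Fin (e'+r) ≃ _),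
    (Matrix.fromBlocks B₂ 0 0 (1 : Matrix (Fin r) (Fin r) R)).submatrix
      ⇑(finSumFinEquiv.symm : Fin (e'+r) ≃ _) ⇑((finCongr heq.symm).trans finSumFinEquiv.symm),
    ?_⟩
  have : (Matrix.fromBlocks B₁ 0 0 (1 : Matrix (Fin r) (Fin r) R)).submatrix
      ⇑((finCongr heq.symm).trans finSumFinEquiv.symm) ⇑(finSumFinEquiv.symm : Fin (e'+r) ≃ _) *
      (Matrix.fromBlocks B₂ 0 0 (1 : Matrix (Fin r) (Fin r) R)).submatrix
      ⇑(finSumFinEquiv.symm : Fin (e'+r) ≃ _) ⇑((finCongr heq.symm).trans finSumFinEquiv.symm)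
      = opd heq B := by
    rw [Matrix.submatrix_mul_equiv, Matrix.fromBlocks_multiply]
    unfold opd
    simp [hB]
  rw [this]

lemma not_full_zero_col {m : ℕ} (M : Matrix (Fin (m+1)) (Fin (m+1)) R)
    (h : ∀ j, M j (Fin.last m) = 0) : ¬ IsFullMat M := by
  intro hf
  refine hf ⟨m, by simp, Matrix.of (fun j i => M j i.castSucc),
    Matrix.of (fun i j => if j = i.castSucc then 1 else 0), ?_⟩
  ext j k
  rw [Matrix.mul_apply]
  by_cases hk : k = Fin.last m
  · subst hk
    rw [h j]
    apply (Finset.sum_eq_zero _).symm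
    intro i _
    have : ¬ (Fin.last m = i.castSucc) := by
      simp [Fin.ext_iff]
      omega
    simp [this]
  · obtain ⟨k', rfl⟩ : ∃ k', k = k'.castSucc :=
      ⟨k.castPred hk, (Fin.castSucc_castPred k hk).symm⟩
    rw [(Finset.sum_eq_single k' ?_ ?_)]
    · simp
    · intro i _ hik
      have : ¬ (k'.castSucc = i.castSucc) := fun hc => hik (Fin.castSucc_injective _ hc).symm
      simp [this]
    · intro hmem; exact absurd (Finset.mem_univ k') hmem

end FullLemmas

lemma opd_opd {R : Type*} [Semiring R] {e r m k d : ℕ} (h1 : e + r = m) (h2 : m + k = d)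
    (B : Matrix (Fin e) (Fin e) R) :
    opd h2 (opd h1 B) = opd (show e + (r + k) = d by omega) B := by
  ext i j
  have hi' := i.isLt
  have hj' := j.isLt
  simp only [opd_entry]
  split_ifs <;> first | rfl | omega

lemma opd_zero {R : Type*} [Semiring R] {d : ℕ} (B : Matrix (Fin d) (Fin d) R) :
    opd (Nat.add_zero d) B = B := by
  ext i j
  rw [opd_entry, dif_pos i.isLt, dif_pos j.isLt]

lemma oplusId_eq_opd {R : Type*} [Semiring R] {d k : ℕ} (B : Matrix (Fin d) (Fin d) R) :
    oplusId B k = opd rfl B := by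
  rw [opd_eq]
  simp

lemma isUnit_oplusId_iff {R : Type*} [Semiring R] {d k : ℕ} (B : Matrix (Fin d) (Fin d) R) :
    IsUnit (oplusId B k) ↔ IsUnit B := by
  rw [oplusId_eq_opd, opd_isUnit_iff]

section LinHelpers
variable {F : Type*} [Field F] {σ : Type*} [Fintype σ]

lemma linMatrix_scalar_mul {α β : Type*} [Fintype α] (S : Matrix α α F)
    (A0 : Matrix α β F) (A : σ → Matrix α β F) :
    S.map (algebraMap F (FreeAlgebra F σ)) * linMatrix A0 A
      = linMatrix (S * A0) (fun i => S * A i) := by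
  ext j k
  simp only [linMatrix, Matrix.mul_apply, Matrix.map_apply, Matrix.of_apply, Algebra.smul_def,
    _root_.map_sum, _root_.map_mul, Finset.mul_sum, mul_add, Finset.sum_mul, mul_assoc]
  rw [Finset.sum_add_distrib]
  congr 1
  exact Finset.sum_comm

lemma linMatrix_mul_scalar {α β : Type*} [Fintype β] (T : Matrix β β F)
    (A0 : Matrix α β F) (A : σ → Matrix α β F) :
    linMatrix A0 A * T.map (algebraMap F (FreeAlgebra F σ))
      = linMatrix (A0 * T) (fun i => A i * T) := by
  ext j k
  simp only [linMatrix, Matrix.mul_apply, Matrix.map_apply, Matrix.of_apply, Algebra.smul_def,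
    _root_.map_sum, _root_.map_mul, Finset.mul_sum, mul_add, add_mul, Finset.sum_mul]
  rw [Finset.sum_add_distrib]
  congr 1
  rw [Finset.sum_comm]
  have hcomm : ∀ (i : σ) (t : F), FreeAlgebra.ι F i * algebraMap F (FreeAlgebra F σ) t
      = algebraMap F (FreeAlgebra F σ) t * FreeAlgebra.ι F i :=
    fun i t => (Algebra.commutes t _).symm
  simp only [hcomm, mul_assoc]

lemma linMatrix_submatrix {α β α' β' : Type*} (A0 : Matrix α β F) (A : σ → Matrix α β F)
    (f : α' → α) (g : β' → β) :
    (linMatrix A0 A).submatrix f g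
      = linMatrix (A0.submatrix f g) (fun i => (A i).submatrix f g) := by
  ext j k
  simp [linMatrix]

lemma isUnit_updateCol_one {d : ℕ} (u : Fin d → F) (k₀ : Fin d) (h : u k₀ ≠ 0) :
    IsUnit ((1 : Matrix (Fin d) (Fin d) F).updateCol k₀ u) := by
  set w : Fin d → F := fun j => if j = k₀ then (u k₀)⁻¹ else -(u j) * (u k₀)⁻¹ with hw
  have key : (1 : Matrix (Fin d) (Fin d) F).updateCol k₀ u *
      (1 : Matrix (Fin d) (Fin d) F).updateCol k₀ w = 1 := by
    ext j k
    rw [Matrix.mul_apply]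
    by_cases hk : k = k₀
    · rw [hk]
      have hterm : ∀ l, (1 : Matrix (Fin d) (Fin d) F).updateCol k₀ u j l *
          (1 : Matrix (Fin d) (Fin d) F).updateCol k₀ w l k₀
          = (if l = k₀ then u j * w k₀ else 0)
            + (if l = j then (if j = k₀ then 0 else w j) else 0) := by
        intro l
        rw [Matrix.updateCol_apply, Matrix.updateCol_apply, if_pos rfl]
        by_cases hl : l = k₀
        · rw [if_pos hl, if_pos hl, hl]
          by_cases hj : j = k₀
          · simp [hj]
          · simp [hj, Ne.symm hj]
        · rw [if_neg hl, if_neg hl, zero_add]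
          by_cases hlj : l = j
          · rw [if_pos hlj]
            rw [hlj] at hl
            rw [hlj, if_neg hl, Matrix.one_apply_eq, one_mul]
          · rw [if_neg hlj, Matrix.one_apply_ne (fun hc => hlj hc.symm), zero_mul]
      rw [Finset.sum_congr rfl (fun l _ => hterm l), Finset.sum_add_distrib,
        Finset.sum_ite_eq' _ k₀, Finset.sum_ite_eq' _ j]
      simp only [Finset.mem_univ, if_true]
      by_cases hj : j = k₀
      · rw [hj, Matrix.one_apply_eq, if_pos rfl, hw]
        simp [h]
      · rw [Matrix.one_apply_ne hj, if_neg hj, hw]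
        simp only [if_pos rfl, if_neg hj]
        field_simp
        simp [h]
    · rw [Finset.sum_eq_single k ?_ ?_]
      · simp only [Matrix.updateCol_apply, if_neg hk]
        rw [Matrix.one_apply_eq, mul_one]
      · intro l _ hl
        simp only [Matrix.updateCol_apply, if_neg hk]
        rw [Matrix.one_apply_ne hl, mul_zero]
      · simp
  exact isUnit_iff_exists.mpr ⟨_, key, mul_eq_one_comm.mp key⟩

lemma exists_unit_col {d : ℕ} (v : Fin d → F) (hv : v ≠ 0) (k₀ : Fin d) :
    ∃ T : Matrix (Fin d) (Fin d) F, IsUnit T ∧ ∀ j, T j k₀ = v j := by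
  obtain ⟨p, hp⟩ := Function.ne_iff.mp hv
  set sw := Equiv.swap p k₀ with hsw
  set E := (1 : Matrix (Fin d) (Fin d) F).updateCol k₀ (fun j => v (sw j)) with hE
  have hEu : IsUnit E := by
    apply isUnit_updateCol_one
    simpa [hsw, Equiv.swap_apply_right] using hp
  set P := (1 : Matrix (Fin d) (Fin d) F).submatrix ⇑sw id with hP
  have hPswap : P = (1 : Matrix (Fin d) (Fin d) F).submatrix id ⇑sw := by
    ext i j
    simp only [hP, Matrix.submatrix_apply, Matrix.one_apply, id]
    by_cases hij : sw i = j
    · rw [if_pos hij, if_pos (by rw [← hij, Equiv.swap_apply_self])]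
    · rw [if_neg hij, if_neg (fun hc => hij (by rw [hc, Equiv.swap_apply_self]))]
  have hPu : IsUnit P := by
    refine isUnit_iff_exists.mpr ⟨P, ?_, ?_⟩ <;>
    · nth_rewrite 1 [hPswap]
      rw [hP, Matrix.submatrix_mul_equiv, Matrix.one_mul, Matrix.submatrix_id_id]
  refine ⟨P * E, hPu.mul hEu, fun j => ?_⟩
  rw [Matrix.mul_apply, Finset.sum_eq_single (sw j) ?_ ?_]
  · have h1 : P j (sw j) = 1 := by
      simp [hP, Matrix.one_apply]
    rw [h1, one_mul, hE, Matrix.updateCol_apply, if_pos rfl, Equiv.swap_apply_self]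
  · intro l _ hl
    have h0 : P j l = 0 := by
      simp only [hP, Matrix.submatrix_apply, id]
      exact Matrix.one_apply_ne (fun hc => hl hc.symm)
    rw [h0, zero_mul]
  · simp

lemma exists_kernel_vec {ι : Type*} [Fintype ι] {D : ℕ} (B : Matrix ι (Fin D) F)
    (h : B.rank ≠ D) : ∃ v : Fin D → F, v ≠ 0 ∧ B *ᵥ v = 0 := by
  have hker : LinearMap.ker B.mulVecLin ≠ ⊥ := by
    intro hbot
    have hrk := LinearMap.finrank_range_add_finrank_ker B.mulVecLin
    rw [hbot, finrank_bot, add_zero, Module.finrank_fin_fun] at hrk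
    exact h hrk
  obtain ⟨v, hvmem, hv0⟩ := (Submodule.ne_bot_iff _).mp hker
  refine ⟨v, hv0, ?_⟩
  simpa [Matrix.mulVecLin_apply] using hvmem

end LinHelpers

lemma isUnit_sandwich {R : Type*} [Semiring R] {d : ℕ} {P M Q : Matrix (Fin d) (Fin d) R}
    (hP : IsUnit P) (hQ : IsUnit Q) (h : IsUnit (P * M * Q)) : IsUnit M := by
  obtain ⟨P', hP1, hP2⟩ := isUnit_iff_exists.mp hP
  obtain ⟨Q', hQ1, hQ2⟩ := isUnit_iff_exists.mp hQ
  have key : M = P' * (P * M * Q) * Q' := by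
    rw [Matrix.mul_assoc P M Q, ← Matrix.mul_assoc P' P (M * Q), hP2, Matrix.one_mul,
      Matrix.mul_assoc M Q Q', hQ1, Matrix.mul_one]
  rw [key]
  exact ((isUnit_iff_exists.mpr ⟨P, hP2, hP1⟩).mul h).mul (isUnit_iff_exists.mpr ⟨Q, hQ2, hQ1⟩)

theorem main_reduction {F : Type*} [Field F] {n : ℕ} :
    ∀ d : ℕ, ∀ L : Matrix (Fin d) (Fin d) (FreeAlgebra F (Fin n)),
      IsFullMat L → IsLinearMat L → ¬ IsUnit L →
      ∃ (e r' : ℕ) (heq : e + r' = d)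
        (U' : Matrix (Fin d) (Fin d) (FreeAlgebra F (Fin n)))
        (S' : Matrix (Fin d) (Fin d) F)
        (L' : Matrix (Fin e) (Fin e) (FreeAlgebra F (Fin n))),
        0 < e ∧ IsUnit U' ∧ IsUnit S' ∧ IsFullMat L' ∧ IsLeftMonicLinear L' ∧
        S'.map (algebraMap F (FreeAlgebra F (Fin n))) * L * U' = opd heq L' ∧
        (¬ IsLeftMonicLinear L → 0 < r') := by
  intro d
  induction d using Nat.strong_induction_on with
  | _ d IH =>
  intro L hfull hlin hnu
  rcases Nat.eq_zero_or_pos d with hd0 | hdpos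
  · exfalso
    apply hnu
    subst hd0
    have hL1 : L = 1 := by ext i j; exact i.elim0
    rw [hL1]
    exact isUnit_one
  by_cases hmonic : IsLeftMonicLinear L
  · refine ⟨d, 0, rfl, 1, 1, L, hdpos, isUnit_one, isUnit_one, hfull, hmonic, ?_,
      fun hn => absurd hmonic hn⟩
    rw [Matrix.map_one _ (map_zero _) (map_one _), Matrix.mul_one, Matrix.one_mul, opd_zero]
  · obtain ⟨m, rfl⟩ : ∃ m, d = m + 1 := ⟨d - 1, by omega⟩
    obtain ⟨A0, A, rfl⟩ := hlin
    have hnotmon : ¬ LeftMonicCoeffs A := fun hc => hmonic ⟨A0, A, rfl, hc⟩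
    obtain ⟨v, hv0, hvker⟩ := exists_kernel_vec
      (Matrix.of fun (p : Fin n × Fin (m+1)) (k : Fin (m+1)) => A p.1 p.2 k)
      (by simpa [LeftMonicCoeffs, Fintype.card_fin] using hnotmon)
    have hAv : ∀ i : Fin n, A i *ᵥ v = 0 := by
      intro i
      funext j
      have hcf := congrFun hvker (i, j)
      simpa [Matrix.mulVec, dotProduct] using hcf
    obtain ⟨T, hTu, hTcol⟩ := exists_unit_col v hv0 (Fin.last m)
    have hT' : IsUnit (T.map (algebraMap F (FreeAlgebra F (Fin n)))) := by
      have h := hTu.map (algebraMap F (FreeAlgebra F (Fin n))).mapMatrix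
      rwa [RingHom.mapMatrix_apply] at h
    set c : Fin (m+1) → F := fun j => (A0 * T) j (Fin.last m) with hc
    have hATcol : ∀ i j, (A i * T) j (Fin.last m) = 0 := by
      intro i j
      have hstep : (A i * T) j (Fin.last m) = (A i *ᵥ v) j := by
        simp [Matrix.mul_apply, Matrix.mulVec, dotProduct, hTcol]
      rw [hstep, hAv i]
      rfl
    have hcne : c ≠ 0 := by
      intro hc0
      have hzero : ∀ j, (linMatrix A0 A * T.map (algebraMap F (FreeAlgebra F (Fin n)))) j
          (Fin.last m) = 0 := by
        intro j
        rw [linMatrix_mul_scalar]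
        have hc0j : (A0 * T) j (Fin.last m) = 0 := congrFun hc0 j
        simp [linMatrix, hATcol, hc0j]
      have hfull2 : IsFullMat (linMatrix A0 A * T.map (algebraMap F (FreeAlgebra F (Fin n)))) := by
        have h := isFullMat_mul_unit isUnit_one hT' hfull
        rwa [Matrix.one_mul] at h
      exact not_full_zero_col _ hzero hfull2
    obtain ⟨T₂, hT₂u, hT₂col⟩ := exists_unit_col c hcne (Fin.last m)
    obtain ⟨W, hWT, hTW⟩ := isUnit_iff_exists.mp hT₂u
    have hWu : IsUnit W := isUnit_iff_exists.mpr ⟨T₂, hTW, hWT⟩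
    have hW' : IsUnit (W.map (algebraMap F (FreeAlgebra F (Fin n)))) := by
      have h := hWu.map (algebraMap F (FreeAlgebra F (Fin n))).mapMatrix
      rwa [RingHom.mapMatrix_apply] at h
    have hcT2 : c = T₂ *ᵥ Pi.single (Fin.last m) 1 := by
      funext l
      simp [Matrix.mulVec, dotProduct, Pi.single_apply, hT₂col]
    have hWc : W *ᵥ c = Pi.single (Fin.last m) 1 := by
      rw [hcT2, Matrix.mulVec_mulVec, hTW, Matrix.one_mulVec]
    set A0' : Matrix (Fin (m+1)) (Fin (m+1)) F := W * (A0 * T) with hA0'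
    set A' : Fin n → Matrix (Fin (m+1)) (Fin (m+1)) F := fun i => W * (A i * T) with hA'
    set N : Matrix (Fin (m+1)) (Fin (m+1)) (FreeAlgebra F (Fin n)) := linMatrix A0' A' with hNdef
    have hN : W.map (algebraMap F (FreeAlgebra F (Fin n))) *
        (linMatrix A0 A * T.map (algebraMap F (FreeAlgebra F (Fin n)))) = N := by
      rw [linMatrix_mul_scalar, linMatrix_scalar_mul]
    have hA'col : ∀ i j, A' i j (Fin.last m) = 0 := by
      intro i j
      simp [hA', Matrix.mul_apply, hATcol]
    have hA0'col : ∀ j, A0' j (Fin.last m) = if j = Fin.last m then 1 else 0 := by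
      intro j
      have h1 : A0' j (Fin.last m) = (W *ᵥ c) j := by
        simp [hA0', Matrix.mul_apply, Matrix.mulVec, dotProduct, hc]
      rw [h1, hWc, Pi.single_apply]
    have hNlast : ∀ j, N j (Fin.last m)
        = algebraMap F (FreeAlgebra F (Fin n)) (if j = Fin.last m then 1 else 0) := by
      intro j
      simp [hNdef, linMatrix, hA'col, hA0'col, apply_ite (algebraMap F (FreeAlgebra F (Fin n)))]
    set E : Matrix (Fin (m+1)) (Fin (m+1)) (FreeAlgebra F (Fin n)) :=
      Matrix.of (fun j k => if j = Fin.last m ∧ ¬ k = Fin.last m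
        then -(N (Fin.last m) k) else 0) with hEdef
    have hEE : E * E = 0 := by
      ext j k
      rw [Matrix.mul_apply, Matrix.zero_apply]
      apply Finset.sum_eq_zero
      intro l _
      by_cases hl : l = Fin.last m
      · have h1 : E j l = 0 := by simp [hEdef, hl]
        rw [h1, zero_mul]
      · have h2 : E l k = 0 := by simp [hEdef, hl]
        rw [h2, mul_zero]
    set U : Matrix (Fin (m+1)) (Fin (m+1)) (FreeAlgebra F (Fin n)) := 1 + E with hUdef
    have hUu : IsUnit U := by
      refine isUnit_iff_exists.mpr ⟨1 - E, ?_, ?_⟩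
      · have hcalc : (1 + E) * (1 - E) = 1 - E * E := by noncomm_ring
        rw [hUdef, hcalc, hEE, sub_zero]
      · have hcalc : (1 - E) * (1 + E) = 1 - E * E := by noncomm_ring
        rw [hUdef, hcalc, hEE, sub_zero]
    set L₁ : Matrix (Fin m) (Fin m) (FreeAlgebra F (Fin n)) :=
      N.submatrix Fin.castSucc Fin.castSucc with hL₁def
    have hNE : ∀ i j, (N * E) i j = N i (Fin.last m) * E (Fin.last m) j := by
      intro i j
      rw [Matrix.mul_apply, Finset.sum_eq_single (Fin.last m) ?_ ?_]
      · intro l _ hl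
        have h2 : E l j = 0 := by simp [hEdef, hl]
        rw [h2, mul_zero]
      · simp
    have hNUopd : N * U = opd rfl L₁ := by
      ext i j
      rw [hUdef, Matrix.mul_add, Matrix.mul_one, Matrix.add_apply, hNE, opd_entry]
      have hilt := i.isLt
      have hjlt := j.isLt
      by_cases hj : j = Fin.last m
      · have hEj : E (Fin.last m) j = 0 := by simp [hEdef, hj]
        rw [hEj, mul_zero, add_zero, hj, hNlast]
        have hjm' : ¬ ((Fin.last m : ℕ) < m) := by simp
        by_cases hi : (i : ℕ) < m
        · rw [dif_pos hi, dif_neg hjm',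
            if_neg (show ¬ i = Fin.last m by rw [Fin.ext_iff, Fin.val_last]; omega),
            _root_.map_zero]
        · rw [dif_neg hi, if_neg hjm',
            if_pos (show (i : ℕ) = ((Fin.last m : Fin (m+1)) : ℕ) by rw [Fin.val_last]; omega),
            if_pos (show i = Fin.last m by rw [Fin.ext_iff, Fin.val_last]; omega),
            _root_.map_one]
      · have hjm : (j : ℕ) < m := by rw [Fin.ext_iff, Fin.val_last] at hj; omega
        have hEj : E (Fin.last m) j = -(N (Fin.last m) j) := by simp [hEdef, hj]
        rw [hEj, hNlast]
        by_cases hi : (i : ℕ) < m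
        · have hine : ¬ i = Fin.last m := by rw [Fin.ext_iff, Fin.val_last]; omega
          rw [if_neg hine, _root_.map_zero, zero_mul, add_zero, dif_pos hi, dif_pos hjm]
          have harg1 : Fin.castSucc (⟨(i : ℕ), hi⟩ : Fin m) = i := Fin.ext (by simp)
          have harg2 : Fin.castSucc (⟨(j : ℕ), hjm⟩ : Fin m) = j := Fin.ext (by simp)
          rw [hL₁def, Matrix.submatrix_apply, harg1, harg2]
        · have hie : i = Fin.last m := by rw [Fin.ext_iff, Fin.val_last]; omega
          rw [if_pos hie, _root_.map_one, one_mul, dif_neg hi, if_pos hjm, hie, add_neg_cancel]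
    have hNU_eq : N * U = W.map (algebraMap F (FreeAlgebra F (Fin n))) * linMatrix A0 A *
        (T.map (algebraMap F (FreeAlgebra F (Fin n))) * U) := by
      rw [← hN]
      simp only [Matrix.mul_assoc]
    have hL₁full : IsFullMat L₁ := by
      apply isFullMat_of_opd rfl
      rw [← hNUopd, hNU_eq]
      exact isFullMat_mul_unit hW' (hT'.mul hUu) hfull
    have hL₁lin : IsLinearMat L₁ := by
      refine ⟨A0'.submatrix Fin.castSucc Fin.castSucc,
        fun i => (A' i).submatrix Fin.castSucc Fin.castSucc, ?_⟩
      rw [hL₁def, hNdef, linMatrix_submatrix]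
    have hL₁nu : ¬ IsUnit L₁ := by
      intro hL₁u
      apply hnu
      apply isUnit_sandwich hW' (hT'.mul hUu)
      rw [← hNU_eq, hNUopd]
      exact (opd_isUnit_iff rfl L₁).mpr hL₁u
    obtain ⟨e, r₁, h₁, U₁, S₁, L', he, hU₁, hS₁, hL'f, hL'm, heq₁, _⟩ :=
      IH m (Nat.lt_succ_self m) L₁ hL₁full hL₁lin hL₁nu
    refine ⟨e, r₁ + 1, by omega,
      T.map (algebraMap F (FreeAlgebra F (Fin n))) * U * opd rfl U₁,
      opd rfl S₁ * W, L', he,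
      (hT'.mul hUu).mul ((opd_isUnit_iff rfl U₁).mpr hU₁),
      ((opd_isUnit_iff rfl S₁).mpr hS₁).mul hWu, hL'f, hL'm, ?_,
      fun _ => Nat.succ_pos r₁⟩
    have key : opd rfl (S₁.map (algebraMap F (FreeAlgebra F (Fin n)))) *
        (W.map (algebraMap F (FreeAlgebra F (Fin n))) * (linMatrix A0 A *
          (T.map (algebraMap F (FreeAlgebra F (Fin n))) * (U * opd rfl U₁))))
        = opd (show e + (r₁ + 1) = m + 1 by omega) L' := by
      have h2 : W.map (algebraMap F (FreeAlgebra F (Fin n))) * (linMatrix A0 A *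
          (T.map (algebraMap F (FreeAlgebra F (Fin n))) * (U * opd rfl U₁)))
          = (N * U) * opd rfl U₁ := by
        rw [hNU_eq]
        simp only [Matrix.mul_assoc]
      rw [h2, hNUopd, opd_mul, opd_mul, ← Matrix.mul_assoc
        (S₁.map (algebraMap F (FreeAlgebra F (Fin n)))) L₁ U₁, heq₁]
      exact opd_opd h₁ rfl L'
    rw [Matrix.map_mul, opd_map]
    simp only [Matrix.mul_assoc]
    exact key

/-- a full linear matrix stably associated to a nonconstant polynomial can
be brought, by an invertible scalar matrix `S'` on the left and a unit `U'` on the right,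
to the form `L' ⊕ I_{r'}` with `L'` a full left monic linear matrix and `r' < d`; moreover
`r' > 0` when `L` is not left monic. -/
theorem full_to_left_monic {F : Type*} [Field F] {n d : ℕ}
    (L : Matrix (Fin d) (Fin d) (FreeAlgebra F (Fin n)))
    (hfull : IsFullMat L) (hlin : IsLinearMat L)
    (f : FreeAlgebra F (Fin n)) (hdeg : 1 ≤ ncDeg f)
    (hassoc : StableAssoc (toMat1 f) L) :
    ∃ (e r' : ℕ) (heq : e + r' = d)
      (U' : Matrix (Fin d) (Fin d) (FreeAlgebra F (Fin n)))
      (S' : Matrix (Fin d) (Fin d) F)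
      (L' : Matrix (Fin e) (Fin e) (FreeAlgebra F (Fin n))),
      0 < e ∧ IsUnit U' ∧ IsUnit S' ∧ IsFullMat L' ∧ IsLeftMonicLinear L' ∧
      S'.map (algebraMap F (FreeAlgebra F (Fin n))) * L * U' =
        Matrix.reindex (finCongr heq) (finCongr heq) (oplusId L' r') ∧
      (¬ IsLeftMonicLinear L → 0 < r')  := by
  have hnu : ¬ IsUnit L := by
    intro hLu
    obtain ⟨t, t', ht, ht', h, P, Q, hP, hQ, heqn⟩ := hassoc
    have h1 : IsUnit (oplusId L t') := (isUnit_oplusId_iff L).mpr hLu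
    have h2 : IsUnit (Matrix.reindex (finCongr h) (finCongr h) (oplusId L t')) := by
      rw [Matrix.reindex_apply]
      exact (_root_.isUnit_submatrix_equiv (finCongr h).symm).mpr h1
    have h3 : IsUnit (oplusId (toMat1 f) t) := by
      rw [heqn]
      exact (hP.mul h2).mul hQ
    have h4 : IsUnit (toMat1 f) := (isUnit_oplusId_iff _).mp h3
    obtain ⟨V, hV1, hV2⟩ := isUnit_iff_exists.mp h4
    have e1 : f * V 0 0 = 1 := by
      have h5 := congrFun (congrFun hV1 0) 0
      rw [Matrix.mul_apply] at h5
      simpa [toMat1, Matrix.one_apply] using h5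
    have e2 : V 0 0 * f = 1 := by
      have h5 := congrFun (congrFun hV2 0) 0
      rw [Matrix.mul_apply] at h5
      simpa [toMat1, Matrix.one_apply] using h5
    exact not_isUnit_of_ncDeg hdeg (isUnit_iff_exists.mpr ⟨V 0 0, e1, e2⟩)
  obtain ⟨e, r', heq, U', S', L', he, hU', hS', hL'f, hL'm, heqn2, himp⟩ :=
    main_reduction d L hfull hlin hnu
  exact ⟨e, r', heq, U', S', L', he, hU', hS', hL'f, hL'm, by rw [heqn2, opd_eq], himp⟩
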